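/- Let X be a nonempty set, let L be a subset of the closed unit ball of ℓ∞(X), and let (μ_j)_{j≥1} be a sequence of finitely supported probability measures on X. Assume there is a function μ : L → ℝ such that μ_j(f) → μ(f) as j → ∞ uniformly in f ∈ L (where μ_j(f) = ∫_X f dμ_j). Then there exists a sequence (x_n)_{n≥1} of points of ⋃_{j=1}^∞ supp μ_j such that sup_{f∈L} |(1/N)·Σ_{k=1}^N f(x_k) − μ(f)| → 0 as N → ∞. -/

import Mathlib

open Filter Finset

lemma list_sum_getD {X : Type*} (f : X → ℝ) (d : X) :
    ∀ (l : List X), ∑ k ∈ Finset.range l.length, f (l.getD k d) = (l.map f).sum := by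
  intro l
  induction l with
  | nil => simp
  | cons a t ih =>
    rw [List.length_cons, Finset.sum_range_succ']
    simp only [List.getD_cons_succ, List.getD_cons_zero, List.map_cons, List.sum_cons]
    rw [ih]; ring

lemma mod_sum (g : ℕ → ℝ) (ℓ : ℕ) (hℓ : 0 < ℓ) :
    ∀ n : ℕ, ∑ k ∈ Finset.range n, g (k % ℓ) =
      ((n / ℓ : ℕ) : ℝ) * ∑ k ∈ Finset.range ℓ, g k + ∑ k ∈ Finset.range (n % ℓ), g k := by
  intro n
  induction n with
  | zero => simp
  | succ n ih =>
    rw [Finset.sum_range_succ, ih]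
    have e1 := Nat.div_add_mod n ℓ
    have hm := Nat.mod_lt n hℓ
    have hs := @Nat.succ_div n ℓ
    by_cases hd : ℓ ∣ (n+1)
    · have h2 : (n+1) / ℓ = n / ℓ + 1 := by rw [hs, if_pos hd]
      have h1 : (n+1) % ℓ = 0 := by
        obtain ⟨c, hc⟩ := hd; rw [hc]; exact Nat.mul_mod_right ℓ c
      have e2 := Nat.div_add_mod (n+1) ℓ
      rw [h1, h2, Nat.mul_add, Nat.mul_one] at e2
      have h3 : n % ℓ = ℓ - 1 := by omega
      rw [h1, h2, h3]
      push_cast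
      have hℓ' : ℓ - 1 + 1 = ℓ := by omega
      have : ∑ k ∈ Finset.range ℓ, g k = ∑ k ∈ Finset.range (ℓ-1), g k + g (ℓ-1) := by
        have h := Finset.sum_range_succ g (ℓ-1)
        rw [hℓ'] at h
        exact h
      rw [this]; simp; ring
    · have h2 : (n+1) / ℓ = n / ℓ := by rw [hs, if_neg hd, Nat.add_zero]
      have e2 := Nat.div_add_mod (n+1) ℓ
      have h1 : (n+1) % ℓ = n % ℓ + 1 := by rw [h2] at e2; omega
      rw [h1, h2, Finset.sum_range_succ]
      ring

lemma exists_unit {X : Type*} (L : Set (X → ℝ))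
    (hL : ∀ f ∈ L, ∀ x, |f x| ≤ 1)
    (s : Finset X) (w : X → ℝ) (hw : ∀ x ∈ s, 0 < w x)
    (hwsum : ∑ x ∈ s, w x = 1) (η : ℝ) (hη : 0 < η) :
    ∃ ℓ : ℕ, 0 < ℓ ∧ ∃ u : ℕ → X, (∀ k < ℓ, u k ∈ s) ∧ ∀ f ∈ L,
      |(∑ k ∈ Finset.range ℓ, f (u k)) - ℓ * ∑ x ∈ s, w x * f x| ≤ ℓ * η := by
  have hs : s.Nonempty := by
    by_contra h
    rw [Finset.not_nonempty_iff_eq_empty] at h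
    rw [h] at hwsum; simp at hwsum
  obtain ⟨x₀, hx₀⟩ := hs
  set m : ℕ := max 1 ⌈(2 * s.card) / η⌉₊ with hm
  have hm1 : 1 ≤ m := le_max_left _ _
  have hmη : 2 * (s.card : ℝ) ≤ m * η := by
    have h1 : ((2 * s.card : ℝ) / η) ≤ (⌈(2 * s.card) / η⌉₊ : ℕ) := Nat.le_ceil _
    have h2 : (⌈(2 * s.card) / η⌉₊ : ℝ) ≤ (m : ℝ) := by
      exact Nat.cast_le.2 (le_max_right 1 _)
    calc 2 * (s.card : ℝ) = ((2 * s.card) / η) * η := by field_simp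
    _ ≤ m * η := by nlinarith
  set c : X → ℕ := fun x => ⌊(m : ℝ) * w x⌋₊ with hc
  have hcle : ∀ x ∈ s, (c x : ℝ) ≤ m * w x := by
    intro x hx
    exact Nat.floor_le (by have := hw x hx; positivity)
  have hsumc : ∑ x ∈ s, c x ≤ m := by
    have h1 : ((∑ x ∈ s, c x : ℕ) : ℝ) ≤ (m : ℝ) := by
      push_cast
      calc ∑ x ∈ s, (c x : ℝ) ≤ ∑ x ∈ s, (m : ℝ) * w x := Finset.sum_le_sum hcle
      _ = m := by rw [← Finset.mul_sum, hwsum, mul_one]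
    exact_mod_cast h1
  -- the list
  set LL : List X := (s.toList.flatMap fun x => List.replicate (c x) x)
      ++ List.replicate (m - ∑ x ∈ s, c x) x₀ with hLL
  have hlen : LL.length = m := by
    rw [hLL, List.length_append, List.length_flatMap, List.length_replicate]
    have h0 : (List.map (List.length ∘ fun x => List.replicate (c x) x) s.toList).sum
        = ∑ x ∈ s, c x := by
      have he : (List.length ∘ fun x => List.replicate (c x) x) = fun x => c x := by
        funext x; simp
      rw [he]
      exact Finset.sum_map_toList s _
    rw [show (List.map (fun a => (List.replicate (c a) a).length) s.toList).sum = ∑ x ∈ s, c x from h0]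
    omega
  have hmemLL : ∀ y ∈ LL, y ∈ s := by
    intro y hy
    rw [hLL] at hy
    rcases List.mem_append.1 hy with h | h
    · obtain ⟨a, ha, hy2⟩ := List.mem_flatMap.1 h
      rw [List.eq_of_mem_replicate hy2]
      exact Finset.mem_toList.1 ha
    · rw [List.eq_of_mem_replicate h]; exact hx₀
  refine ⟨m, by omega, fun k => LL.getD k x₀, ?_, ?_⟩
  · intro k hk
    apply hmemLL
    have hk' : k < LL.length := by omega
    show LL.getD k x₀ ∈ LL
    rw [List.getD_eq_getElem _ _ hk']
    exact List.getElem_mem _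
  · intro f hf
    have hsum : ∑ k ∈ Finset.range m, f (LL.getD k x₀)
        = ∑ x ∈ s, (c x : ℝ) * f x + ((m - ∑ x ∈ s, c x : ℕ) : ℝ) * f x₀ := by
      have hls := list_sum_getD f x₀ LL
      rw [hlen] at hls
      rw [hls, hLL, List.map_append, List.sum_append, List.map_flatMap]
      congr 1
      · have h1 : (s.toList.flatMap fun a => (List.replicate (c a) a).map f)
            = ((s.toList.map fun a => (List.replicate (c a) a).map f).flatten) := by
          rw [List.flatMap_def]
        rw [h1, List.sum_flatten, List.map_map]
        have h2 : (List.sum ∘ fun a => (List.replicate (c a) a).map f)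
            = fun a => (c a : ℝ) * f a := by
          funext a
          simp [List.map_replicate, List.sum_replicate, nsmul_eq_mul]
        rw [h2]
        exact Finset.sum_map_toList s _
      · rw [List.map_replicate, List.sum_replicate, nsmul_eq_mul]
    rw [hsum]
    -- error estimate
    have hfb : ∀ x, |f x| ≤ 1 := hL f hf
    have hgap : ∀ x ∈ s, |(c x : ℝ) - m * w x| ≤ 1 := by
      intro x hx
      have h1 := hcle x hx
      have h2 : (m : ℝ) * w x < c x + 1 := Nat.lt_floor_add_one _
      rw [abs_le]; constructor <;> nlinarith
    have hrem : ((m - ∑ x ∈ s, c x : ℕ) : ℝ) ≤ s.card := by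
      have h1 : ((m - ∑ x ∈ s, c x : ℕ) : ℝ) = (m : ℝ) - ∑ x ∈ s, (c x : ℝ) := by
        rw [Nat.cast_sub hsumc]; push_cast; ring
      rw [h1]
      have h2 : (m : ℝ) - ∑ x ∈ s, (c x : ℝ) = ∑ x ∈ s, ((m : ℝ) * w x - c x) := by
        rw [Finset.sum_sub_distrib, ← Finset.mul_sum, hwsum, mul_one]
      rw [h2]
      calc ∑ x ∈ s, ((m : ℝ) * w x - c x) ≤ ∑ x ∈ s, (1 : ℝ) := by
            apply Finset.sum_le_sum
            intro x hx
            have := hgap x hx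
            rw [abs_le] at this
            linarith [this.1]
      _ = s.card := by simp
    have key : |∑ x ∈ s, (c x : ℝ) * f x + ((m - ∑ x ∈ s, c x : ℕ) : ℝ) * f x₀
        - m * ∑ x ∈ s, w x * f x| ≤ 2 * s.card := by
      have h1 : ∑ x ∈ s, (c x : ℝ) * f x - m * ∑ x ∈ s, w x * f x
          = ∑ x ∈ s, ((c x : ℝ) - m * w x) * f x := by
        rw [Finset.mul_sum, ← Finset.sum_sub_distrib]
        exact Finset.sum_congr rfl fun x _ => by ring
      have h2 : |∑ x ∈ s, ((c x : ℝ) - m * w x) * f x| ≤ s.card := by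
        calc |∑ x ∈ s, ((c x : ℝ) - m * w x) * f x| ≤ ∑ x ∈ s, |((c x : ℝ) - m * w x) * f x| :=
              Finset.abs_sum_le_sum_abs _ _
        _ ≤ ∑ x ∈ s, (1 : ℝ) := by
            apply Finset.sum_le_sum
            intro x hx
            rw [abs_mul]
            calc |(c x : ℝ) - m * w x| * |f x| ≤ 1 * 1 := by
                  apply mul_le_mul (hgap x hx) (hfb x) (abs_nonneg _) zero_le_one
            _ = 1 := by ring
        _ = s.card := by simp
      have h3 : |((m - ∑ x ∈ s, c x : ℕ) : ℝ) * f x₀| ≤ s.card := by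
        rw [abs_mul, abs_of_nonneg (by positivity : (0:ℝ) ≤ ((m - ∑ x ∈ s, c x : ℕ) : ℝ))]
        calc ((m - ∑ x ∈ s, c x : ℕ) : ℝ) * |f x₀| ≤ s.card * 1 :=
              mul_le_mul hrem (hfb x₀) (abs_nonneg _) (Nat.cast_nonneg _)
        _ = s.card := by ring
      calc |∑ x ∈ s, (c x : ℝ) * f x + ((m - ∑ x ∈ s, c x : ℕ) : ℝ) * f x₀
          - m * ∑ x ∈ s, w x * f x|
          = |(∑ x ∈ s, ((c x : ℝ) - m * w x) * f x) + ((m - ∑ x ∈ s, c x : ℕ) : ℝ) * f x₀| := by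
            rw [← h1]; congr 1; ring
      _ ≤ |∑ x ∈ s, ((c x : ℝ) - m * w x) * f x| + |((m - ∑ x ∈ s, c x : ℕ) : ℝ) * f x₀| :=
            abs_add_le _ _
      _ ≤ 2 * s.card := by linarith
    calc |∑ x ∈ s, (c x : ℝ) * f x + ((m - ∑ x ∈ s, c x : ℕ) : ℝ) * f x₀
        - m * ∑ x ∈ s, w x * f x| ≤ 2 * s.card := key
    _ ≤ m * η := hmη

lemma abs_add_four' (A B C D : ℝ) : |A + B + C + D| ≤ |A| + |B| + |C| + |D| := by
  calc |A + B + C + D| ≤ |A + B + C| + |D| := abs_add_le _ _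
  _ ≤ (|A + B| + |C|) + |D| := by linarith [abs_add_le (A + B) C]
  _ ≤ |A| + |B| + |C| + |D| := by linarith [abs_add_le A B]

set_option maxHeartbeats 1600000 in
theorem stmt2 {X : Type*} [Nonempty X] (L : Set (X → ℝ))
    (hL : ∀ f ∈ L, ∀ x, |f x| ≤ 1)
    (s : ℕ → Finset X) (w : ℕ → X → ℝ)
    (hw : ∀ j, ∀ x ∈ s j, 0 < w j x)
    (hwsum : ∀ j, ∑ x ∈ s j, w j x = 1)
    (μ : (X → ℝ) → ℝ)
    (hconv : ∀ ε : ℝ, 0 < ε → ∃ J : ℕ, ∀ j ≥ J, ∀ f ∈ L,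
      |(∑ x ∈ s j, w j x * f x) - μ f| ≤ ε) :
    ∃ seq : ℕ → X, (∀ n, ∃ j, seq n ∈ s j) ∧
      ∀ ε : ℝ, 0 < ε → ∃ N₀ : ℕ, ∀ N ≥ N₀, ∀ f ∈ L,
        |(N : ℝ)⁻¹ * (∑ k ∈ Finset.range N, f (seq k)) - μ f| ≤ ε := by
  classical
  -- |μ f| ≤ 2 for f ∈ L
  have hμ2 : ∀ f ∈ L, |μ f| ≤ 2 := by
    intro f hf
    obtain ⟨J, hJ⟩ := hconv 1 one_pos
    have h1 := hJ J le_rfl f hf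
    have h2 : |∑ x ∈ s J, w J x * f x| ≤ 1 := by
      calc |∑ x ∈ s J, w J x * f x| ≤ ∑ x ∈ s J, |w J x * f x| :=
            Finset.abs_sum_le_sum_abs _ _
      _ ≤ ∑ x ∈ s J, w J x := by
          apply Finset.sum_le_sum
          intro x hx
          rw [abs_mul, abs_of_pos (hw J x hx)]
          calc w J x * |f x| ≤ w J x * 1 :=
                mul_le_mul_of_nonneg_left (hL f hf x) (le_of_lt (hw J x hx))
          _ = w J x := by ring
      _ = 1 := hwsum J
    calc |μ f| = |∑ x ∈ s J, w J x * f x - (∑ x ∈ s J, w J x * f x - μ f)| := by congr 1; ring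
    _ ≤ |∑ x ∈ s J, w J x * f x| + |∑ x ∈ s J, w J x * f x - μ f| := abs_sub _ _
    _ ≤ 2 := by linarith
  -- accuracy
  set a : ℕ → ℝ := fun i => 1 / (2 * (i + 1)) with ha
  have hapos : ∀ i : ℕ, 0 < a i := by intro i; rw [ha]; positivity
  -- unit blocks
  have H : ∀ i : ℕ, ∃ j : ℕ, ∃ ℓ : ℕ, 0 < ℓ ∧ ∃ u : ℕ → X,
      (∀ k < ℓ, u k ∈ s j) ∧ ∀ f ∈ L,
      |(∑ k ∈ Finset.range ℓ, f (u k)) - ℓ * μ f| ≤ ℓ * a i := by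
    intro i
    have hq : (0:ℝ) < 1 / (4 * ((i:ℝ) + 1)) := by positivity
    obtain ⟨J, hJ⟩ := hconv _ hq
    obtain ⟨ℓ, hℓ, u, hmem, happ⟩ :=
      exists_unit L hL (s J) (w J) (hw J) (hwsum J) _ hq
    refine ⟨J, ℓ, hℓ, u, hmem, ?_⟩
    intro f hf
    have h1 := happ f hf
    have h2 := hJ J le_rfl f hf
    have hℓr : (0:ℝ) ≤ ℓ := Nat.cast_nonneg _
    calc |(∑ k ∈ Finset.range ℓ, f (u k)) - ℓ * μ f|
        = |((∑ k ∈ Finset.range ℓ, f (u k)) - ℓ * ∑ x ∈ s J, w J x * f x)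
          + (ℓ : ℝ) * ((∑ x ∈ s J, w J x * f x) - μ f)| := by congr 1; ring
    _ ≤ |(∑ k ∈ Finset.range ℓ, f (u k)) - ℓ * ∑ x ∈ s J, w J x * f x|
          + |(ℓ : ℝ) * ((∑ x ∈ s J, w J x * f x) - μ f)| := abs_add_le _ _
    _ ≤ ℓ * (1 / (4 * ((i:ℝ) + 1))) + ℓ * (1 / (4 * ((i:ℝ) + 1))) := by
        apply add_le_add h1
        rw [abs_mul, abs_of_nonneg hℓr]
        exact mul_le_mul_of_nonneg_left h2 hℓr
    _ = ℓ * a i := by rw [ha]; push_cast; field_simp; ring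
  choose jdx ℓ hℓ u hmem happ using H
  -- block lengths
  set T : ℕ → ℕ := fun n =>
    Nat.rec 0 (fun i t => t + (4 * (i + 2) * (3 * t + 3 * ℓ (i + 1))) * ℓ i) n with hT
  set kk : ℕ → ℕ := fun i => 4 * (i + 2) * (3 * T i + 3 * ℓ (i + 1)) with hkk
  have hTs : ∀ i, T (i + 1) = T i + kk i * ℓ i := fun i => rfl
  have hT0 : T 0 = 0 := rfl
  have hkpos : ∀ i, 0 < kk i := by
    intro i
    rw [hkk]
    have := hℓ (i + 1)
    positivity
  have hTlt : ∀ i, T i < T (i + 1) := by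
    intro i
    rw [hTs i]
    have h1 := hkpos i
    have h2 := hℓ i
    have : 0 < kk i * ℓ i := Nat.mul_pos h1 h2
    omega
  have hTmono : StrictMono T := strictMono_nat_of_lt_succ hTlt
  have hTi : ∀ i, i ≤ T i := by
    intro i
    induction i with
    | zero => omega
    | succ n ih => have := hTlt n; omega
  -- block index
  set I : ℕ → ℕ := fun n => Nat.findGreatest (fun i => T i ≤ n) n with hI
  have hIeq : ∀ i n, T i ≤ n → n < T (i + 1) → I n = i := by
    intro i n h1 h2
    rw [hI]
    rw [Nat.findGreatest_eq_iff]
    refine ⟨le_trans (hTi i) h1, fun _ => h1, ?_⟩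
    intro m hm hm2 hP
    have : T (i + 1) ≤ T m := hTmono.monotone hm
    omega
  -- the sequence
  set seq : ℕ → X := fun n => u (I n) ((n - T (I n)) % ℓ (I n)) with hseq
  have hseqval : ∀ i n, T i ≤ n → n < T (i + 1) → seq n = u i ((n - T i) % ℓ i) := by
    intro i n h1 h2
    rw [hseq]
    simp only []
    rw [hIeq i n h1 h2]
  refine ⟨seq, ?_, ?_⟩
  · intro n
    refine ⟨jdx (I n), ?_⟩
    rw [hseq]
    exact hmem (I n) _ (Nat.mod_lt _ (hℓ (I n)))
  -- block sum decomposition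
  have hblock : ∀ (f : X → ℝ) (i N : ℕ), T i ≤ N → N ≤ T (i + 1) →
      ∑ k ∈ Finset.range N, f (seq k) = (∑ k ∈ Finset.range (T i), f (seq k))
        + (((N - T i) / ℓ i : ℕ) : ℝ) * ∑ k ∈ Finset.range (ℓ i), f (u i k)
        + ∑ k ∈ Finset.range ((N - T i) % ℓ i), f (u i k) := by
    intro f i N h1 h2
    have hsplit : ∑ k ∈ Finset.range N, f (seq k)
        = (∑ k ∈ Finset.range (T i), f (seq k)) + ∑ k ∈ Finset.Ico (T i) N, f (seq k) := by
      rw [Finset.range_eq_Ico, Finset.range_eq_Ico]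
      exact (Finset.sum_Ico_consecutive _ (Nat.zero_le _) h1).symm
    rw [hsplit]
    have hIco : ∑ k ∈ Finset.Ico (T i) N, f (seq k)
        = ∑ k ∈ Finset.range (N - T i), f (seq (T i + k)) := by
      rw [Finset.sum_Ico_eq_sum_range]
    rw [hIco]
    have hval : ∀ k ∈ Finset.range (N - T i), f (seq (T i + k)) = f (u i (k % ℓ i)) := by
      intro k hk
      rw [Finset.mem_range] at hk
      have hk1 : T i ≤ T i + k := Nat.le_add_right _ _
      have hk2 : T i + k < T (i + 1) := by omega
      have h3 : T i + k - T i = k := by omega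
      rw [hseqval i (T i + k) hk1 hk2, h3]
    rw [Finset.sum_congr rfl hval]
    rw [mod_sum (fun k => f (u i k)) (ℓ i) (hℓ i) (N - T i)]
    ring
  -- crude bound
  have hcrude : ∀ f ∈ L, ∀ n : ℕ, |(∑ k ∈ Finset.range n, f (seq k)) - n * μ f| ≤ 3 * n := by
    intro f hf n
    have h1 : |∑ k ∈ Finset.range n, f (seq k)| ≤ n := by
      calc |∑ k ∈ Finset.range n, f (seq k)| ≤ ∑ k ∈ Finset.range n, |f (seq k)| :=
            Finset.abs_sum_le_sum_abs _ _
      _ ≤ ∑ k ∈ Finset.range n, (1:ℝ) := Finset.sum_le_sum fun k _ => hL f hf _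
      _ = n := by simp
    have h2 : |(n:ℝ) * μ f| ≤ 2 * n := by
      rw [abs_mul, abs_of_nonneg (Nat.cast_nonneg n : (0:ℝ) ≤ n)]
      calc (n:ℝ) * |μ f| ≤ n * 2 := mul_le_mul_of_nonneg_left (hμ2 f hf) (Nat.cast_nonneg n)
      _ = 2 * n := by ring
    calc |(∑ k ∈ Finset.range n, f (seq k)) - n * μ f|
        ≤ |∑ k ∈ Finset.range n, f (seq k)| + |(n:ℝ) * μ f| := abs_sub _ _
    _ ≤ 3 * n := by linarith
  -- main single-block estimate
  have hmain : ∀ i : ℕ, 1 ≤ i → ∀ N, T i ≤ N → N < T (i + 1) → ∀ f ∈ L,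
      |(N : ℝ)⁻¹ * (∑ k ∈ Finset.range N, f (seq k)) - μ f| ≤ 2 / i := by
    intro i hi N hN1 hN2 f hf
    obtain ⟨p, rfl⟩ : ∃ p, i = p + 1 := ⟨i - 1, by omega⟩
    set q := (N - T (p + 1)) / ℓ (p + 1) with hq
    set r := (N - T (p + 1)) % ℓ (p + 1) with hr
    have hrlt : r < ℓ (p + 1) := Nat.mod_lt _ (hℓ (p + 1))
    have hdm := Nat.div_add_mod (N - T (p + 1)) (ℓ (p + 1))
    -- S N decomposition
    have hSN := hblock f (p + 1) N hN1 (le_of_lt hN2)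
    -- S (T (p+1)) decomposition
    have hST := hblock f p (T (p + 1)) (le_of_lt (hTlt p)) le_rfl
    have hdiff : T (p + 1) - T p = kk p * ℓ p := by rw [hTs p]; omega
    rw [hdiff, Nat.mul_div_cancel _ (hℓ p), Nat.mul_mod_left] at hST
    simp only [Finset.range_zero, Finset.sum_empty, add_zero] at hST
    -- notation
    set Sf : ℕ → ℝ := fun n => ∑ k ∈ Finset.range n, f (seq k) with hSf
    set Uf : ℕ → ℝ := fun i => ∑ k ∈ Finset.range (ℓ i), f (u i k) with hUf
    have hSN' : Sf N = Sf (T p) + (kk p : ℝ) * Uf p + (q : ℝ) * Uf (p + 1)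
        + ∑ k ∈ Finset.range r, f (u (p + 1) k) := by
      rw [hSf]; simp only []
      rw [hSN, hST]
    -- N as a real sum
    have hNnat : N = T p + kk p * ℓ p + q * ℓ (p + 1) + r := by
      have h3 : T (p + 1) = T p + kk p * ℓ p := hTs p
      have hdm2 : q * ℓ (p + 1) + r = N - T (p + 1) := by
        rw [hq, hr, Nat.mul_comm]
        exact hdm
      omega
    have hNcast : (N : ℝ) = (T p : ℝ) + (kk p : ℝ) * ℓ p + (q : ℝ) * ℓ (p + 1) + r := by
      rw [hNnat]; push_cast; ring
    -- error terms
    have e1 : |Sf (T p) - (T p : ℝ) * μ f| ≤ 3 * T p := hcrude f hf (T p)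
    have e2 : |Uf p - (ℓ p : ℝ) * μ f| ≤ ℓ p * a p := happ p f hf
    have e3 : |Uf (p + 1) - (ℓ (p + 1) : ℝ) * μ f| ≤ ℓ (p + 1) * a (p + 1) := happ (p + 1) f hf
    have e4 : |(∑ k ∈ Finset.range r, f (u (p + 1) k)) - (r : ℝ) * μ f| ≤ 3 * r := by
      have h1 : |∑ k ∈ Finset.range r, f (u (p + 1) k)| ≤ r := by
        calc |∑ k ∈ Finset.range r, f (u (p + 1) k)|
            ≤ ∑ k ∈ Finset.range r, |f (u (p + 1) k)| := Finset.abs_sum_le_sum_abs _ _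
        _ ≤ ∑ k ∈ Finset.range r, (1:ℝ) := Finset.sum_le_sum fun k _ => hL f hf _
        _ = r := by simp
      have h2 : |(r:ℝ) * μ f| ≤ 2 * r := by
        rw [abs_mul, abs_of_nonneg (Nat.cast_nonneg r : (0:ℝ) ≤ r)]
        calc (r:ℝ) * |μ f| ≤ r * 2 := mul_le_mul_of_nonneg_left (hμ2 f hf) (Nat.cast_nonneg r)
        _ = 2 * r := by ring
      calc |(∑ k ∈ Finset.range r, f (u (p + 1) k)) - (r : ℝ) * μ f|
          ≤ |∑ k ∈ Finset.range r, f (u (p + 1) k)| + |(r:ℝ) * μ f| := abs_sub _ _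
      _ ≤ 3 * r := by linarith
    -- cast size bounds
    have hkℓN : (kk p : ℝ) * ℓ p ≤ N := by
      have h1 : kk p * ℓ p ≤ N := by
        have := hTs p
        omega
      exact_mod_cast h1
    have hqℓN : (q : ℝ) * ℓ (p + 1) ≤ N := by
      have h1 : q * ℓ (p + 1) ≤ N := by omega
      exact_mod_cast h1
    -- the key choice of kk p
    have hkey : 3 * (T p : ℝ) + 3 * ℓ (p + 1) ≤ (N : ℝ) * a (p + 1) := by
      have h1 : (3 * T p + 3 * ℓ (p + 1)) * (2 * (p + 2)) ≤ N := by
        calc (3 * T p + 3 * ℓ (p + 1)) * (2 * (p + 2))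
            ≤ (4 * (p + 2) * (3 * T p + 3 * ℓ (p + 1))) * 1 := by ring_nf; nlinarith
        _ ≤ kk p * ℓ p := by
            rw [hkk]
            exact Nat.mul_le_mul le_rfl (hℓ p)
        _ ≤ T (p + 1) := by rw [hTs p]; omega
        _ ≤ N := hN1
      have h1' : ((3 * T p + 3 * ℓ (p + 1) : ℕ) : ℝ) * (2 * ((p:ℝ) + 2)) ≤ N := by
        have := (Nat.cast_le (α := ℝ)).2 h1
        push_cast at this ⊢
        linarith
      rw [ha]
      simp only []
      have hp2 : (0:ℝ) < 2 * ((↑(p+1):ℝ) + 1) := by positivity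
      rw [mul_one_div, le_div_iff₀ hp2]
      push_cast at h1' ⊢
      nlinarith
    -- combine
    have htotal : |Sf N - (N : ℝ) * μ f|
        ≤ 3 * T p + (N : ℝ) * a p + (N : ℝ) * a (p + 1) + 3 * ℓ (p + 1) := by
      have hid : Sf N - (N : ℝ) * μ f
          = (Sf (T p) - (T p : ℝ) * μ f)
          + (kk p : ℝ) * (Uf p - (ℓ p : ℝ) * μ f)
          + (q : ℝ) * (Uf (p + 1) - (ℓ (p + 1) : ℝ) * μ f)
          + ((∑ k ∈ Finset.range r, f (u (p + 1) k)) - (r : ℝ) * μ f) := by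
        rw [hSN', hNcast]; ring
      rw [hid]
      have t2 : |(kk p : ℝ) * (Uf p - (ℓ p : ℝ) * μ f)| ≤ (N : ℝ) * a p := by
        rw [abs_mul, abs_of_nonneg (Nat.cast_nonneg (kk p) : (0:ℝ) ≤ kk p)]
        calc (kk p : ℝ) * |Uf p - (ℓ p : ℝ) * μ f| ≤ (kk p : ℝ) * ((ℓ p : ℝ) * a p) :=
              mul_le_mul_of_nonneg_left e2 (Nat.cast_nonneg _)
        _ = ((kk p : ℝ) * ℓ p) * a p := by ring
        _ ≤ (N : ℝ) * a p := mul_le_mul_of_nonneg_right hkℓN (le_of_lt (hapos p))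
      have t3 : |(q : ℝ) * (Uf (p + 1) - (ℓ (p + 1) : ℝ) * μ f)| ≤ (N : ℝ) * a (p + 1) := by
        rw [abs_mul, abs_of_nonneg (Nat.cast_nonneg q : (0:ℝ) ≤ q)]
        calc (q : ℝ) * |Uf (p + 1) - (ℓ (p + 1) : ℝ) * μ f|
            ≤ (q : ℝ) * ((ℓ (p + 1) : ℝ) * a (p + 1)) :=
              mul_le_mul_of_nonneg_left e3 (Nat.cast_nonneg _)
        _ = ((q : ℝ) * ℓ (p + 1)) * a (p + 1) := by ring
        _ ≤ (N : ℝ) * a (p + 1) := mul_le_mul_of_nonneg_right hqℓN (le_of_lt (hapos _))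
      have e4' : |(∑ k ∈ Finset.range r, f (u (p + 1) k)) - (r : ℝ) * μ f| ≤ 3 * ℓ (p + 1) := by
        have : (r : ℝ) ≤ ℓ (p + 1) := by exact_mod_cast le_of_lt hrlt
        linarith
      calc |(Sf (T p) - (T p : ℝ) * μ f)
          + (kk p : ℝ) * (Uf p - (ℓ p : ℝ) * μ f)
          + (q : ℝ) * (Uf (p + 1) - (ℓ (p + 1) : ℝ) * μ f)
          + ((∑ k ∈ Finset.range r, f (u (p + 1) k)) - (r : ℝ) * μ f)|
          ≤ |Sf (T p) - (T p : ℝ) * μ f|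
          + |(kk p : ℝ) * (Uf p - (ℓ p : ℝ) * μ f)|
          + |(q : ℝ) * (Uf (p + 1) - (ℓ (p + 1) : ℝ) * μ f)|
          + |(∑ k ∈ Finset.range r, f (u (p + 1) k)) - (r : ℝ) * μ f| := by
            exact abs_add_four' _ _ _ _
      _ ≤ 3 * T p + (N : ℝ) * a p + (N : ℝ) * a (p + 1) + 3 * ℓ (p + 1) := by
            linarith
    -- conclude
    have hNpos : 0 < N := by
      have := hTi (p + 1)
      omega
    have hNr : (0:ℝ) < N := by exact_mod_cast hNpos
    have hfinal : |Sf N - (N : ℝ) * μ f| ≤ (N : ℝ) * (2 / ((p:ℝ) + 1)) := by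
      have hsum : (N : ℝ) * a p + (N : ℝ) * a (p + 1) + (N : ℝ) * a (p + 1)
          ≤ (N : ℝ) * (2 / ((p:ℝ) + 1)) := by
        have hp1 : (0:ℝ) < (p:ℝ) + 1 := by positivity
        have ha_p : a p = 1 / (2 * ((p:ℝ) + 1)) := by rw [ha]
        have ha_p1 : a (p + 1) = 1 / (2 * ((p:ℝ) + 1 + 1)) := by rw [ha]; push_cast; ring_nf
        have eA : a (p + 1) ≤ a p := by
          rw [ha_p, ha_p1]
          apply one_div_le_one_div_of_le (by positivity)
          linarith
        have eB : a p + 2 * a p ≤ 2 / ((p:ℝ) + 1) := by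
          rw [ha_p, mul_one_div, div_add_div _ _ (by positivity) (by positivity),
            div_le_div_iff₀ (by positivity) hp1]
          ring_nf
          nlinarith
        have eC : a p + 2 * a (p + 1) ≤ 2 / ((p:ℝ) + 1) := by nlinarith
        calc (N : ℝ) * a p + (N : ℝ) * a (p + 1) + (N : ℝ) * a (p + 1)
            = (N : ℝ) * (a p + 2 * a (p + 1)) := by ring
        _ ≤ (N : ℝ) * (2 / ((p:ℝ) + 1)) := mul_le_mul_of_nonneg_left eC (le_of_lt hNr)
      calc |Sf N - (N : ℝ) * μ f|
          ≤ 3 * T p + (N : ℝ) * a p + (N : ℝ) * a (p + 1) + 3 * ℓ (p + 1) := htotal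
      _ ≤ (N : ℝ) * a (p + 1) + (N : ℝ) * a p + (N : ℝ) * a (p + 1) := by linarith
      _ ≤ (N : ℝ) * (2 / (p + 1)) := by linarith
    have hNe : (N:ℝ) ≠ 0 := ne_of_gt hNr
    have hrw : (N : ℝ)⁻¹ * (∑ k ∈ Finset.range N, f (seq k)) - μ f
        = (N:ℝ)⁻¹ * (Sf N - (N:ℝ) * μ f) := by
      rw [hSf]; simp only []; field_simp
    rw [hrw, abs_mul, abs_of_pos (inv_pos.2 hNr)]
    calc (N:ℝ)⁻¹ * |Sf N - (N:ℝ) * μ f|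
        ≤ (N:ℝ)⁻¹ * ((N:ℝ) * (2 / ((p:ℝ) + 1))) :=
          mul_le_mul_of_nonneg_left hfinal (le_of_lt (inv_pos.2 hNr))
    _ = 2 / ((p:ℝ) + 1) := by field_simp
    _ = 2 / ((p + 1 : ℕ) : ℝ) := by push_cast; ring
  -- conclusion
  intro ε hε
  set i : ℕ := max 1 ⌈2 / ε⌉₊ with hi
  have hi1 : 1 ≤ i := le_max_left _ _
  have hiε : 2 / (i : ℝ) ≤ ε := by
    have h1 : (2 / ε) ≤ (⌈2 / ε⌉₊ : ℝ) := Nat.le_ceil _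
    have h2 : (⌈2 / ε⌉₊ : ℝ) ≤ i := by exact_mod_cast le_max_right 1 _
    have hir : (0:ℝ) < i := by
      have : (1:ℝ) ≤ i := by exact_mod_cast hi1
      linarith
    rw [div_le_iff₀ hir]
    rw [div_le_iff₀ hε] at h1
    nlinarith
  refine ⟨T i, ?_⟩
  intro N hN f hf
  -- locate N in a block
  set i' : ℕ := I N with hi'
  have hP0 : T 0 ≤ N := by rw [hT0]; omega
  have hTI : T i' ≤ N := by
    rw [hi', hI]
    exact Nat.findGreatest_spec (P := fun i => T i ≤ N) (Nat.zero_le N) hP0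
  have hii' : i ≤ i' := by
    rw [hi', hI]
    exact Nat.le_findGreatest (le_trans (hTi i) hN) hN
  have hNlt : N < T (i' + 1) := by
    by_contra h
    push_neg at h
    have h2 : i' + 1 ≤ N := le_trans (hTi (i' + 1)) h
    have h3 : i' + 1 ≤ I N := Nat.le_findGreatest h2 h
    omega
  have hest := hmain i' (le_trans hi1 hii') N hTI hNlt f hf
  calc |(N : ℝ)⁻¹ * (∑ k ∈ Finset.range N, f (seq k)) - μ f| ≤ 2 / (i' : ℝ) := hest
  _ ≤ 2 / (i : ℝ) := by
      apply div_le_div_of_nonneg_left (by norm_num) _ (by exact_mod_cast hii')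
      have : (1:ℝ) ≤ i := by exact_mod_cast hi1
      linarith
  _ ≤ ε := hiε
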